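/- Let I be a path DPG with n ≥ 2 agents (agents ordered i_1,…,i_n with M_{i_t} = {i_{t+1}} for t < n and M_{i_n} = ∅) and let k ≥ 2 be an integer. Then there exists a location profile A* with A*_i ∈ {0, 1/k, 2/k, …, 1} for all i ∈ N such that SW(A*) ≥ (1 − 2/k) · SW(A') for every location profile A'. -/

import Mathlib

open Finset

/-- A distance preservation game (DPG): a finite set of agents `N`, for each agent `i` a
relationship set `M i ⊆ N \ {i}`, and an ideal distance `d i j ∈ [0,1]` for each `j ∈ M i`. -/
structure DPG (N : Type) [Fintype N] [DecidableEq N] where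
  M : N → Finset N
  notMem_self : ∀ i, i ∉ M i
  d : N → N → ℝ
  d_nonneg : ∀ i j, j ∈ M i → 0 ≤ d i j
  d_le_one : ∀ i j, j ∈ M i → d i j ≤ 1

variable {N : Type} [Fintype N] [DecidableEq N]

/-- The utility of agent `i` from agent `j` under location profile `A`. -/
def DPG.utilPair (I : DPG N) (A : N → ℝ) (i j : N) : ℝ :=
  1 - |(|A i - A j|) - I.d i j|

/-- The utility of agent `i` under location profile `A`. -/
def DPG.util (I : DPG N) (A : N → ℝ) (i : N) : ℝ :=
  ∑ j ∈ I.M i, I.utilPair A i j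

/-- The social welfare of a location profile. -/
def DPG.SW (I : DPG N) (A : N → ℝ) : ℝ := ∑ i, I.util A i

/-- A valid location profile: every agent is located in the unit interval. -/
def IsProfile (A : N → ℝ) : Prop := ∀ i, A i ∈ Set.Icc (0:ℝ) 1

/-- A location profile is jump stable if no agent can increase their utility by jumping
to another location in the unit interval. -/
def DPG.JumpStable (I : DPG N) (A : N → ℝ) : Prop :=
  ∀ i : N, ∀ x ∈ Set.Icc (0:ℝ) 1, I.util (Function.update A i x) i ≤ I.util A i

/-- A DPG is symmetric if `j ∈ M i` implies `i ∈ M j` and `d i j = d j i`. -/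
def DPG.Symmetric (I : DPG N) : Prop :=
  ∀ i j, j ∈ I.M i → i ∈ I.M j ∧ I.d i j = I.d j i

/-- For a path DPG with `n ≥ 2` agents and any integer `k ≥ 2`, there is a location profile
whose locations are multiples of `1/k` and whose social welfare is at least `1 - 2/k` times
the social welfare of any location profile. -/

lemma auxPair (x y x' y' d e : ℝ) (hx : |x - x'| ≤ e) (hy : |y - y'| ≤ e) :
    (1 - |(|x' - y'|) - d|) - 2*e ≤ 1 - |(|x - y|) - d| := by
  have h1 : |(|x - y|) - (|x' - y'|)| ≤ 2*e := by
    calc |(|x - y|) - (|x' - y'|)| ≤ |(x - y) - (x' - y')| := abs_abs_sub_abs_le_abs_sub _ _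
    _ = |(x - x') - (y - y')| := by ring_nf
    _ ≤ |x - x'| + |y - y'| := abs_sub _ _
    _ ≤ 2*e := by linarith
  have h2 := abs_sub_le (|x - y|) (|x' - y'|) d
  linarith

lemma auxRound (k : ℕ) (hk : 1 ≤ k) (x : ℝ) (hx0 : 0 ≤ x) (hx1 : x ≤ 1) :
    ∃ m : ℕ, m ≤ k ∧ |x - (m:ℝ)/k| ≤ 1/(2*k) := by
  have hkR : (0:ℝ) < k := by exact_mod_cast hk
  set r : ℤ := round (x * k) with hr
  have habs : |x * k - (r:ℝ)| ≤ 1/2 := abs_sub_round (x * k)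
  rw [abs_le] at habs
  have hxk0 : 0 ≤ x * k := by positivity
  have hxk1 : x * k ≤ k := by nlinarith
  have hr0 : 0 ≤ r := by
    have h : (-1:ℝ) < (r:ℝ) := by linarith
    have h2 : (-1:ℤ) < r := by exact_mod_cast h
    omega
  have hrk : r ≤ (k:ℤ) := by
    have h : (r:ℝ) < (k:ℝ) + 1 := by linarith
    have h2 : r < (k:ℤ) + 1 := by exact_mod_cast h
    omega
  have hcast : ((r.toNat : ℕ) : ℝ) = (r:ℝ) := by
    have := Int.toNat_of_nonneg hr0
    exact_mod_cast congrArg (fun z : ℤ => (z:ℝ)) this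
  refine ⟨r.toNat, by omega, ?_⟩
  have heq : x - ((r.toNat:ℕ):ℝ)/k = (x*k - (r:ℝ))/k := by
    rw [hcast]; field_simp
  rw [heq, show (1:ℝ)/(2*k) = (1/2)/k by ring, abs_div, abs_of_pos hkR]
  gcongr
  · exact abs_le.mpr habs

theorem stmt19 (n : ℕ) (hn : 2 ≤ n) (k : ℕ) (hk : 2 ≤ k) (I : DPG (Fin n))
    (hM : ∀ (i : Fin n) (h : (i:ℕ)+1 < n), I.M i = {⟨(i:ℕ)+1, h⟩})
    (hMlast : ∀ i : Fin n, (i:ℕ) = n - 1 → I.M i = ∅) :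
    ∃ A : Fin n → ℝ, (∀ i, ∃ m : ℕ, m ≤ k ∧ A i = (m : ℝ) / k) ∧
      ∀ A' : Fin n → ℝ, IsProfile A' → (1 - 2/(k:ℝ)) * I.SW A' ≤ I.SW A := by
  obtain ⟨m, rfl⟩ : ∃ m, n = m + 1 := ⟨n - 1, by omega⟩
  have hkR : (0:ℝ) < k := by positivity
  have hkR2 : (2:ℝ) ≤ k := by exact_mod_cast hk
  -- grid profiles
  set G : (Fin (m+1) → Fin (k+1)) → (Fin (m+1) → ℝ) := fun f i => ((f i : ℕ) : ℝ)/k with hG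
  obtain ⟨g, -, hg⟩ := Finset.exists_max_image (Finset.univ : Finset (Fin (m+1) → Fin (k+1)))
    (fun f => I.SW (G f)) Finset.univ_nonempty
  refine ⟨G g, fun i => ⟨(g i : ℕ), by omega, by simp [hG]⟩, ?_⟩
  -- structure of SW on the path
  have hSW : ∀ C : Fin (m+1) → ℝ,
      I.SW C = ∑ j : Fin m, I.utilPair C j.castSucc j.succ := by
    intro C
    rw [DPG.SW, Fin.sum_univ_castSucc]
    have hlast : I.util C (Fin.last m) = 0 := by
      rw [DPG.util, hMlast _ (by simp), Finset.sum_empty]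
    rw [hlast, add_zero]
    refine Finset.sum_congr rfl fun j _ => ?_
    have h : ((j.castSucc : Fin (m+1)) : ℕ) + 1 < m + 1 := by simp
    have he : (⟨((j.castSucc : Fin (m+1)) : ℕ)+1, h⟩ : Fin (m+1)) = j.succ := by ext; simp
    rw [DPG.util, hM _ h, Finset.sum_singleton, he]
  have hmem : ∀ j : Fin m, j.succ ∈ I.M j.castSucc := by
    intro j
    have h : ((j.castSucc : Fin (m+1)) : ℕ) + 1 < m + 1 := by simp
    rw [hM _ h, Finset.mem_singleton]
    ext; simp
  -- the baseline profile B
  set c : ℝ := ((k/2 : ℕ) : ℝ)/k with hc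
  have hq0 : (0:ℝ) ≤ c := by positivity
  have hkey1 : ((k:ℝ)) ≤ 2*((k/2:ℕ):ℝ) + 1 := by exact_mod_cast (by omega : k ≤ 2*(k/2)+1)
  have hkey2 : 2*((k/2:ℕ):ℝ) ≤ (k:ℝ) := by exact_mod_cast (by omega : 2*(k/2) ≤ k)
  have hc2 : c ≤ 1/2 := by
    rw [hc, div_le_div_iff₀ hkR (by norm_num : (0:ℝ) < 2)]
    linarith
  have hc1 : ((k:ℝ) - 1)/(2*k) ≤ c := by
    rw [hc, div_le_div_iff₀ (by positivity : (0:ℝ) < 2*k) hkR]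
    nlinarith
  set b : Fin (m+1) → Fin (k+1) :=
    fun i => ⟨if (i:ℕ) % 2 = 0 then 0 else k/2, by split <;> omega⟩ with hb
  have hBj : ∀ j : Fin m, |G b j.castSucc - G b j.succ| = c := by
    intro j
    by_cases hp : (j:ℕ) % 2 = 0
    · have hp2 : ¬((j:ℕ)+1) % 2 = 0 := by omega
      have e1 : G b j.castSucc = 0 := by simp [hG, hb, hp]
      have e2 : G b j.succ = c := by simp [hG, hb, hp2, hc]
      rw [e1, e2, zero_sub, abs_neg, abs_of_nonneg hq0]
    · have hp2 : ((j:ℕ)+1) % 2 = 0 := by omega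
      have e1 : G b j.castSucc = c := by simp [hG, hb, hp, hc]
      have e2 : G b j.succ = 0 := by simp [hG, hb, hp2]
      rw [e1, e2, sub_zero, abs_of_nonneg hq0]
  have hBedge : ∀ j : Fin m, ((k:ℝ)-1)/(2*k) ≤ I.utilPair (G b) j.castSucc j.succ := by
    intro j
    have hd0 := I.d_nonneg _ _ (hmem j)
    have hd1 := I.d_le_one _ _ (hmem j)
    rw [DPG.utilPair, hBj j]
    have habs : |c - I.d j.castSucc j.succ| ≤ 1 - c :=
      abs_le.mpr ⟨by linarith, by linarith⟩
    linarith
  have hSWB : (m:ℝ) * (((k:ℝ)-1)/(2*k)) ≤ I.SW (G b) := by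
    rw [hSW]
    calc (m:ℝ) * (((k:ℝ)-1)/(2*k)) = ∑ _j : Fin m, ((k:ℝ)-1)/(2*k) := by
          rw [Finset.sum_const, Finset.card_univ, Fintype.card_fin, nsmul_eq_mul]
      _ ≤ _ := Finset.sum_le_sum fun j _ => hBedge j
  have hA1 : I.SW (G b) ≤ I.SW (G g) := hg b (Finset.mem_univ b)
  have hm0 : (0:ℝ) ≤ m := Nat.cast_nonneg m
  intro A' hA'
  -- round A' to the grid
  choose ms hms1 hms2 using fun i =>
    auxRound k (by omega) (A' i) (hA' i).1 (hA' i).2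
  set R : Fin (m+1) → Fin (k+1) := fun i => ⟨ms i, by have := hms1 i; omega⟩ with hR
  have hRcoord : ∀ i, |G R i - A' i| ≤ 1/(2*k) := by
    intro i
    rw [abs_sub_comm]
    simpa [hG, hR] using hms2 i
  have hRedge : ∀ j : Fin m,
      I.utilPair A' j.castSucc j.succ - 2*(1/(2*(k:ℝ))) ≤ I.utilPair (G R) j.castSucc j.succ := by
    intro j
    have := auxPair (G R j.castSucc) (G R j.succ) (A' j.castSucc) (A' j.succ)
      (I.d j.castSucc j.succ) (1/(2*k)) (hRcoord j.castSucc) (hRcoord j.succ)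
    simpa [DPG.utilPair] using this
  have hSWR : I.SW A' - (m:ℝ)*(2*(1/(2*(k:ℝ)))) ≤ I.SW (G R) := by
    rw [hSW (G R), hSW A']
    calc (∑ j : Fin m, I.utilPair A' j.castSucc j.succ) - (m:ℝ)*(2*(1/(2*(k:ℝ))))
        = ∑ j : Fin m, (I.utilPair A' j.castSucc j.succ - 2*(1/(2*(k:ℝ)))) := by
          rw [Finset.sum_sub_distrib, Finset.sum_const, Finset.card_univ,
            Fintype.card_fin, nsmul_eq_mul]
      _ ≤ _ := Finset.sum_le_sum fun j _ => hRedge j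
  have hA2 : I.SW (G R) ≤ I.SW (G g) := hg R (Finset.mem_univ R)
  have hmk : (m:ℝ)*(2*(1/(2*(k:ℝ)))) = (m:ℝ)/k := by field_simp
  rw [hmk] at hSWR
  rcases le_total (I.SW A') ((m:ℝ)/2) with hcase | hcase
  · have h3 : (1 - 2/(k:ℝ)) * I.SW A' ≤ (1 - 2/(k:ℝ)) * ((m:ℝ)/2) := by
      apply mul_le_mul_of_nonneg_left hcase
      rw [sub_nonneg, div_le_one hkR]
      exact hkR2
    have h4 : (1 - 2/(k:ℝ)) * ((m:ℝ)/2) ≤ (m:ℝ) * (((k:ℝ)-1)/(2*k)) := by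
      rw [show (1 - 2/(k:ℝ)) * ((m:ℝ)/2) = ((m:ℝ)*((k:ℝ)-2))/(2*k) by field_simp,
        show (m:ℝ) * (((k:ℝ)-1)/(2*k)) = ((m:ℝ)*((k:ℝ)-1))/(2*k) by ring]
      gcongr
      nlinarith
    linarith
  · have h5 : (m:ℝ)/k ≤ 2/(k:ℝ) * I.SW A' := by
      rw [show (2:ℝ)/k * I.SW A' = (2*I.SW A')/k by ring]
      gcongr
      linarith
    nlinarith
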